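/- Let $k$ be a field of characteristic $\ne 2$. If $u_s(k) = 1$, then $m_s(k) = 1$. -/

import Mathlib

open scoped Multiplicative ENNReal

/-- The diagonal quadratic form `⟨a i⟩` over the field `k`. -/
noncomputable def diagQF (k : Type*) [Field k] {ι : Type*} [Fintype ι] (a : ι → k) :
    QuadraticForm k (ι → k) :=
  QuadraticMap.weightedSumSquares k a

/-- A quadratic form is universal if it represents every nonzero element. -/
def QFUniversal {k M : Type*} [Field k] [AddCommGroup M] [Module k M]
    (q : QuadraticForm k M) : Prop :=
  ∀ a : k, a ≠ 0 → ∃ x, q x = a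

/-- The set of dimensions of anisotropic universal (nondegenerate) quadratic forms over `k`;
every nondegenerate form over a field of characteristic `≠ 2` is isometric to a diagonal
form with unit entries. -/
def AUSet (k : Type*) [Field k] : Set ℕ :=
  {n | ∃ a : Fin n → kˣ,
    (diagQF k fun i => (a i : k)).Anisotropic ∧ QFUniversal (diagQF k fun i => (a i : k))}

/-- The `m`-invariant: the minimal dimension of an anisotropic universal quadratic form
(`⊤` if there is none). -/
noncomputable def mInv (k : Type*) [Field k] : ℕ∞ :=
  sInf ((↑) '' AUSet k)

/-- The `u`-invariant: the maximal dimension of an anisotropic quadratic form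
(`⊤` if there is no maximum). -/
noncomputable def uInv (k : Type*) [Field k] : ℕ∞ :=
  sSup ((↑) '' {n : ℕ | ∃ a : Fin n → kˣ, (diagQF k fun i => (a i : k)).Anisotropic})

/-- `L` is a finitely generated field extension of transcendence degree one over `k`. -/
def IsOneVarFunctionField (k L : Type*) [Field k] [Field L] [Algebra k L] : Prop :=
  ∃ x : L, Transcendental k x ∧ FiniteDimensional ↥(IntermediateField.adjoin k {x}) L

universe u

/-- The strong `u`-invariant of `k`. -/
noncomputable def uS (k : Type u) [Field k] : ℝ≥0∞ :=
  sInf {n : ℝ≥0∞ |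
    (∀ (k' : Type u) [Field k'] [Algebra k k'], FiniteDimensional k k' →
      (uInv k' : ℝ≥0∞) ≤ n) ∧
    (∀ (K' : Type u) [Field K'] [Algebra k K'], IsOneVarFunctionField k K' →
      (uInv K' : ℝ≥0∞) ≤ 2 * n)}

/-- The strong `m`-invariant of `k`. -/
noncomputable def mS (k : Type u) [Field k] : ℝ≥0∞ :=
  sSup ((fun n : ℕ => (n : ℝ≥0∞)) ''
    {n : ℕ | ∀ (k' : Type u) [Field k'] [Algebra k k'], FiniteDimensional k k' →
      (n : ℕ∞) ≤ mInv k' ∧ ((2 * n : ℕ) : ℕ∞) ≤ mInv (RatFunc k')})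

section Aux

variable {K : Type*} [Field K]

lemma diagQF_apply {ι : Type*} [Fintype ι] (a : ι → K) (x : ι → K) :
    diagQF K a x = ∑ i, a i * (x i * x i) := by
  simp [diagQF, QuadraticMap.weightedSumSquares_apply, smul_eq_mul]

lemma zero_not_mem_AUSet : 0 ∉ AUSet K := by
  rintro ⟨a, -, huniv⟩
  obtain ⟨x, hx⟩ := huniv 1 one_ne_zero
  rw [diagQF_apply] at hx
  simp at hx

lemma one_not_mem_AUSet_ratFunc : 1 ∉ AUSet (RatFunc K) := by
  rintro ⟨a, -, huniv⟩
  have hX : ((a 0 : RatFunc K)) * RatFunc.X ≠ 0 :=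
    mul_ne_zero (a 0).ne_zero RatFunc.X_ne_zero
  obtain ⟨x, hx⟩ := huniv _ hX
  rw [diagQF_apply, Fin.sum_univ_one] at hx
  have hx0 : x 0 * x 0 = RatFunc.X := mul_left_cancel₀ (a 0).ne_zero hx
  have hne : x 0 ≠ 0 := by
    intro h0
    rw [h0, mul_zero] at hx0
    exact RatFunc.X_ne_zero hx0.symm
  have hdeg := RatFunc.intDegree_mul hne hne
  rw [hx0, RatFunc.intDegree_X] at hdeg
  omega

lemma one_le_mInv : 1 ≤ mInv K := by
  apply le_sInf
  rintro x ⟨n, hn, rfl⟩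
  rcases n with _ | n
  · exact absurd hn zero_not_mem_AUSet
  · exact_mod_cast Nat.one_le_iff_ne_zero.mpr (Nat.succ_ne_zero n)

lemma two_le_mInv_ratFunc : 2 ≤ mInv (RatFunc K) := by
  apply le_sInf
  rintro x ⟨n, hn, rfl⟩
  match n with
  | 0 => exact absurd hn zero_not_mem_AUSet
  | 1 => exact absurd hn one_not_mem_AUSet_ratFunc
  | (n + 2) => exact_mod_cast by omega

lemma exists_sq (hu : uInv K ≤ 1) (b : K) (hb : b ≠ 0) : ∃ c : K, c * c = b := by
  by_contra hsq
  push_neg at hsq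
  set a : Fin 2 → Kˣ := ![1, -Units.mk0 b hb] with ha
  have haniso : (diagQF K fun i => (a i : K)).Anisotropic := by
    intro x hx
    rw [diagQF_apply, Fin.sum_univ_two] at hx
    have hx' : x 0 * x 0 - b * (x 1 * x 1) = 0 := by
      simpa [ha, sub_eq_add_neg] using hx
    by_cases h1 : x 1 = 0
    · have h0 : x 0 = 0 := by
        have : x 0 * x 0 = 0 := by rw [h1] at hx'; simpa using hx'
        exact mul_self_eq_zero.mp this
      funext i
      fin_cases i <;> simp [h0, h1]
    · exfalso
      apply hsq (x 0 / x 1)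
      field_simp
      linear_combination hx'
  have h2 : ((2 : ℕ) : ℕ∞) ∈
      ((↑) '' {n : ℕ | ∃ a : Fin n → Kˣ, (diagQF K fun i => (a i : K)).Anisotropic}) :=
    ⟨2, ⟨a, haniso⟩, rfl⟩
  have hle : ((2 : ℕ) : ℕ∞) ≤ uInv K := le_sSup h2
  have h21 : ((2 : ℕ) : ℕ∞) ≤ 1 := hle.trans hu
  have : (2 : ℕ) ≤ 1 := by exact_mod_cast h21
  omega

lemma mInv_le_one (hu : uInv K ≤ 1) : mInv K ≤ 1 := by
  apply sInf_le
  refine ⟨1, ⟨fun _ => 1, ?_, ?_⟩, rfl⟩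
  · intro x hx
    rw [diagQF_apply, Fin.sum_univ_one] at hx
    have h0 : x 0 = 0 := by
      have : x 0 * x 0 = 0 := by simpa using hx
      exact mul_self_eq_zero.mp this
    funext i
    fin_cases i
    simp [h0]
  · intro b hb
    obtain ⟨c, hc⟩ := exists_sq hu b hb
    exact ⟨fun _ => c, by rw [diagQF_apply, Fin.sum_univ_one]; simpa using hc⟩

end Aux

/-- For a field `k` of characteristic `≠ 2`, if `u_s(k) = 1` then
`m_s(k) = 1`. -/
theorem stmt8 (k : Type u) [Field k] (hchar : ringChar k ≠ 2)
    (h : uS k = 1) : mS k = 1 := by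
  -- extract `uInv k ≤ 1` from `uS k = 1`
  have hlt : uS k < 2 := by rw [h]; exact ENNReal.one_lt_two
  obtain ⟨x, hxS, hx2⟩ := sInf_lt_iff.mp hlt
  have hub : (uInv k : ℝ≥0∞) ≤ x := hxS.1 k inferInstance
  have hcast : (uInv k : ℝ≥0∞) < ((2 : ℕ∞) : ℝ≥0∞) := by
    rw [ENat.toENNReal_ofNat]
    exact lt_of_le_of_lt hub hx2
  have hu2 : uInv k < 2 := ENat.toENNReal_lt.mp hcast
  have hu : uInv k ≤ 1 := Order.le_of_lt_succ (by rw [ENat.succ_def, one_add_one_eq_two]; exact hu2)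
  have hm : mInv k ≤ 1 := mInv_le_one hu
  unfold mS
  apply le_antisymm
  · apply sSup_le
    rintro y ⟨n, hn, rfl⟩
    have h1 := (hn k inferInstance).1
    have hn1 : (n : ℕ∞) ≤ 1 := h1.trans hm
    have hle1 : n ≤ 1 := by exact_mod_cast hn1
    show ((n : ℕ) : ℝ≥0∞) ≤ 1
    exact_mod_cast hle1
  · apply le_sSup
    refine ⟨1, fun k' _ _ _ => ⟨?_, ?_⟩, by norm_num⟩
    · simpa using (one_le_mInv (K := k'))
    · simpa using (two_le_mInv_ratFunc (K := k'))
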